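/- Let m, p ≥ 1, let F₁, …, F_m : [−π, π] → ℂ^p and G₁, …, G_m : [−π, π] → ℂ be measurable with G_i(ω) ≠ 0 for almost every ω and each i, and let k₁, …, k_m > 0. Assume the functions ω ↦ |F_i(ω)|₂²/|G_i(ω)|², ω ↦ |G_i(ω)|², and ω ↦ |F_i(ω)|₂ are integrable for each i. Then (∑_{i=1}^m (1/2π) ∫_{−π}^{π} |F_i(ω)|₂²/|G_i(ω)|² dω) · (∑_{i=1}^m k_i² (1/2π) ∫_{−π}^{π} |G_i(ω)|² dω) ≥ ((1/2π) ∫_{−π}^{π} ∑_{i=1}^m k_i |F_i(ω)|₂ dω)². (Lower bound on the mean squared error of the diagonal-pre-filter zero-forcing mechanism for a MIMO filter F = [F₁, …, F_m].) -/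

import Mathlib

open MeasureTheory Real

noncomputable instance (ι : Type*) : MeasurableSpace (EuclideanSpace ℂ ι) := MeasurableSpace.comap WithLp.ofLp MeasurableSpace.pi

theorem zfe_mimo_diagonal_lower_bound (m p : ℕ) (hm : 1 ≤ m) (hp : 1 ≤ p)
    (F : Fin m → ℝ → EuclideanSpace ℂ (Fin p)) (G : Fin m → ℝ → ℂ)
    (hF : ∀ i, Measurable (F i)) (hG : ∀ i, Measurable (G i))
    (hGne : ∀ i, ∀ᵐ ω ∂(volume.restrict (Set.Icc (-π) π)), G i ω ≠ 0)
    (k : Fin m → ℝ) (hk : ∀ i, 0 < k i)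
    (hFG : ∀ i, IntegrableOn (fun ω => ‖F i ω‖ ^ 2 / ‖G i ω‖ ^ 2) (Set.Icc (-π) π))
    (hG2 : ∀ i, IntegrableOn (fun ω => ‖G i ω‖ ^ 2) (Set.Icc (-π) π))
    (hFn : ∀ i, IntegrableOn (fun ω => ‖F i ω‖) (Set.Icc (-π) π)) :
    (∑ i, (1 / (2 * π)) * ∫ ω in Set.Icc (-π) π, ‖F i ω‖ ^ 2 / ‖G i ω‖ ^ 2) *
        (∑ i, k i ^ 2 * ((1 / (2 * π)) * ∫ ω in Set.Icc (-π) π, ‖G i ω‖ ^ 2)) ≥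
      ((1 / (2 * π)) * ∫ ω in Set.Icc (-π) π, ∑ i, k i * ‖F i ω‖) ^ 2 := by
  set μ := volume.restrict (Set.Icc (-π) π) with hμ
  set A : Fin m → ℝ := fun i => ∫ ω, ‖F i ω‖ ^ 2 / ‖G i ω‖ ^ 2 ∂μ with hA
  set B : Fin m → ℝ := fun i => ∫ ω, ‖G i ω‖ ^ 2 ∂μ with hB
  have hAnn : ∀ i, 0 ≤ A i := fun i =>
    integral_nonneg fun ω => div_nonneg (sq_nonneg _) (sq_nonneg _)
  have hBnn : ∀ i, 0 ≤ B i := fun i => integral_nonneg fun ω => sq_nonneg _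
  -- Per-index Cauchy-Schwarz
  have key : ∀ i, ∫ ω, ‖F i ω‖ ∂μ ≤ Real.sqrt (A i) * Real.sqrt (B i) := by
    intro i
    set f : ℝ → ℝ := fun ω => ‖F i ω‖ / ‖G i ω‖ with hf'
    set g : ℝ → ℝ := fun ω => ‖G i ω‖ with hg'
    have hfsq : ∀ ω, f ω ^ 2 = ‖F i ω‖ ^ 2 / ‖G i ω‖ ^ 2 := fun ω => div_pow _ _ 2
    have hFnm : Measurable fun ω => ‖F i ω‖ := by
      simp_rw [EuclideanSpace.norm_eq]
      exact Real.continuous_sqrt.measurable.comp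
        (Finset.measurable_sum _ fun j _ =>
          ((measurable_pi_apply j).comp ((comap_measurable _).comp (hF i))).norm.pow_const 2)
    have hfm : AEStronglyMeasurable f μ :=
      (hFnm.div (hG i).norm).aestronglyMeasurable
    have hgm : AEStronglyMeasurable g μ := (hG i).norm.aestronglyMeasurable
    have hf2 : Integrable (fun ω => f ω ^ 2) μ := by
      simpa only [hfsq] using (hFG i).integrable
    have hg2 : Integrable (fun ω => g ω ^ 2) μ := hG2 i
    have hfL : MemLp f 2 μ := (memLp_two_iff_integrable_sq hfm).2 hf2
    have hgL : MemLp g 2 μ := (memLp_two_iff_integrable_sq hgm).2 hg2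
    have hpq : (2 : ℝ).HolderConjugate 2 := by
      constructor <;> norm_num
    have h2 : (ENNReal.ofReal (2:ℝ)) = 2 := by simp [ENNReal.ofReal_ofNat]
    have hcs := integral_mul_le_Lp_mul_Lq_of_nonneg hpq
      (Filter.Eventually.of_forall fun ω => div_nonneg (norm_nonneg _) (norm_nonneg _))
      (Filter.Eventually.of_forall fun ω => norm_nonneg _)
      (h2 ▸ hfL) (h2 ▸ hgL)
    have heq : ∫ ω, ‖F i ω‖ ∂μ = ∫ ω, f ω * g ω ∂μ := by
      refine integral_congr_ae ?_
      filter_upwards [hGne i] with ω hω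
      have : ‖G i ω‖ ≠ 0 := norm_ne_zero_iff.2 hω
      exact (div_mul_cancel₀ _ this).symm
    rw [heq]
    calc ∫ ω, f ω * g ω ∂μ
        ≤ (∫ ω, f ω ^ (2:ℝ) ∂μ) ^ ((1:ℝ)/2) * (∫ ω, g ω ^ (2:ℝ) ∂μ) ^ ((1:ℝ)/2) := hcs
      _ = Real.sqrt (A i) * Real.sqrt (B i) := by
          simp_rw [Real.rpow_two, hfsq, ← Real.sqrt_eq_rpow]
          rfl
  -- sum
  have hsum : ∫ ω, ∑ i, k i * ‖F i ω‖ ∂μ = ∑ i, k i * ∫ ω, ‖F i ω‖ ∂μ := by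
    rw [integral_finset_sum]
    · exact Finset.sum_congr rfl fun i _ => integral_const_mul _ _
    · exact fun i _ => (hFn i).const_mul _
  have hle : ∫ ω, ∑ i, k i * ‖F i ω‖ ∂μ ≤ ∑ i, Real.sqrt (A i) * (k i * Real.sqrt (B i)) := by
    rw [hsum]
    refine Finset.sum_le_sum fun i _ => ?_
    calc k i * ∫ ω, ‖F i ω‖ ∂μ
        ≤ k i * (Real.sqrt (A i) * Real.sqrt (B i)) :=
          mul_le_mul_of_nonneg_left (key i) (hk i).le
      _ = Real.sqrt (A i) * (k i * Real.sqrt (B i)) := by ring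
  have hcs2 : (∑ i, Real.sqrt (A i) * (k i * Real.sqrt (B i))) ^ 2 ≤
      (∑ i, A i) * ∑ i, k i ^ 2 * B i := by
    have := Finset.sum_mul_sq_le_sq_mul_sq Finset.univ
      (fun i => Real.sqrt (A i)) (fun i => k i * Real.sqrt (B i))
    calc (∑ i, Real.sqrt (A i) * (k i * Real.sqrt (B i))) ^ 2
        ≤ (∑ i, Real.sqrt (A i) ^ 2) * ∑ i, (k i * Real.sqrt (B i)) ^ 2 := this
      _ = (∑ i, A i) * ∑ i, k i ^ 2 * B i := by
          congr 1
          · exact Finset.sum_congr rfl fun i _ => Real.sq_sqrt (hAnn i)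
          · refine Finset.sum_congr rfl fun i _ => ?_
            rw [mul_pow, Real.sq_sqrt (hBnn i)]
  have hInt_nn : 0 ≤ ∫ ω, ∑ i, k i * ‖F i ω‖ ∂μ :=
    integral_nonneg fun ω => Finset.sum_nonneg fun i _ =>
      mul_nonneg (hk i).le (norm_nonneg _)
  have hmain : (∫ ω, ∑ i, k i * ‖F i ω‖ ∂μ) ^ 2 ≤ (∑ i, A i) * ∑ i, k i ^ 2 * B i :=
    le_trans (pow_le_pow_left₀ hInt_nn hle 2) hcs2
  have hπ : (0:ℝ) < 1 / (2 * π) := by positivity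
  have lhs_eq : (∑ i, (1 / (2 * π)) * A i) * (∑ i, k i ^ 2 * ((1 / (2 * π)) * B i)) =
      (1 / (2 * π)) ^ 2 * ((∑ i, A i) * ∑ i, k i ^ 2 * B i) := by
    rw [← Finset.mul_sum]
    have : ∑ i, k i ^ 2 * ((1 / (2 * π)) * B i) = (1 / (2 * π)) * ∑ i, k i ^ 2 * B i := by
      rw [Finset.mul_sum]; exact Finset.sum_congr rfl fun i _ => by ring
    rw [this]; ring
  rw [ge_iff_le, mul_pow, lhs_eq]
  exact mul_le_mul_of_nonneg_left hmain (by positivity)
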